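/- Let g ≥ 1, η ∈ (0, 1], and δ ∈ (0, π/2). Let w₁, …, w_g be mutually independent random unit vectors in ℂ^g such that for every index i and every hyperplane V ⊂ ℂ^g (a linear subspace of dimension g − 1), Pr[‖w_i − Π_V w_i‖ ≥ sin δ] ≥ η. Then the probability that w₁, …, w_g are linearly independent (equivalently, span ℂ^g) is at least η^g. -/

import Mathlib

open MeasureTheory ProbabilityTheory

noncomputable instance euclideanComplexMeasurableSpace (g : ℕ) :
    MeasurableSpace (EuclideanSpace ℂ (Fin g)) := borel _

instance euclideanComplexBorelSpace (g : ℕ) :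
    BorelSpace (EuclideanSpace ℂ (Fin g)) := ⟨rfl⟩

/-- Any subspace of dimension `< g` is contained in a hyperplane. -/
lemma exists_hyperplane_ge {g : ℕ} (W : Submodule ℂ (EuclideanSpace ℂ (Fin g)))
    (hW : Module.finrank ℂ W < g) :
    ∃ V : Submodule ℂ (EuclideanSpace ℂ (Fin g)), W ≤ V ∧ Module.finrank ℂ V = g - 1 := by
  have hE : Module.finrank ℂ (EuclideanSpace ℂ (Fin g)) = g := by
    simp [finrank_euclideanSpace_fin]
  have horth := W.finrank_add_finrank_orthogonal
  rw [hE] at horth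
  have hne : Wᗮ ≠ ⊥ := by
    intro h
    rw [h, finrank_bot] at horth
    omega
  obtain ⟨u, huW, hu⟩ := Submodule.exists_mem_ne_zero_of_ne_bot hne
  refine ⟨(ℂ ∙ u)ᗮ, ?_, ?_⟩
  · have h1 : (ℂ ∙ u) ≤ Wᗮ := Submodule.span_le.mpr (Set.singleton_subset_iff.mpr huW)
    exact W.le_orthogonal_orthogonal.trans (Submodule.orthogonal_le h1)
  · have h2 := (ℂ ∙ u).finrank_add_finrank_orthogonal
    rw [hE, finrank_span_singleton hu] at h2
    omega

/-- **Diversity under anti-concentration.**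
Let `w₁, …, w_g` be mutually independent random unit vectors in `ℂ^g` such that each
one escapes every hyperplane `V ⊂ ℂ^g` by Fubini–Study distance `δ` (i.e. the orthogonal
residual `‖w - Π_V w‖` is at least `sin δ`) with probability at least `η`.  Then the
`w_i` are linearly independent (equivalently, span `ℂ^g`) with probability at least `η^g`. -/
theorem prob_linearIndependent_of_anti_concentration
    {Ω : Type*} [MeasurableSpace Ω] (P : Measure Ω) [IsProbabilityMeasure P]
    {g : ℕ} (hg : 1 ≤ g) (η δ : ℝ) (hη : η ∈ Set.Ioc (0 : ℝ) 1)
    (hδ : δ ∈ Set.Ioo 0 (Real.pi / 2))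
    (w : Fin g → Ω → EuclideanSpace ℂ (Fin g))
    (hunit : ∀ i ω, ‖w i ω‖ = 1)
    (hmeas : ∀ i, Measurable (w i))
    (hindep : iIndepFun w P)
    (hanti : ∀ (i : Fin g) (V : Submodule ℂ (EuclideanSpace ℂ (Fin g))),
      Module.finrank ℂ V = g - 1 →
      ENNReal.ofReal η ≤ P {ω | Real.sin δ ≤
        ‖w i ω - (V.orthogonalProjectionOnto (w i ω) : EuclideanSpace ℂ (Fin g))‖}) :
    ENNReal.ofReal η ^ g ≤ P {ω | LinearIndependent ℂ fun i => w i ω} := by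
  let E := EuclideanSpace ℂ (Fin g)
  have key : ∀ k (hk : k ≤ g),
      ENNReal.ofReal η ^ k ≤ P {ω | LinearIndependent ℂ fun i : Fin k => w (Fin.castLE hk i) ω} := by
    intro k
    induction k with
    | zero =>
      intro hk
      have : {ω | LinearIndependent ℂ fun i : Fin 0 => w (Fin.castLE hk i) ω} = Set.univ := by
        ext ω; simp [linearIndependent_empty_type]
      simp [this]
    | succ k ih =>
      intro hk
      have hk' : k ≤ g := Nat.le_of_succ_le hk
      have hklt : k < g := hk
      set kk : Fin g := ⟨k, hklt⟩ with hkk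
      -- the tuple of first k vectors
      set X : Ω → (Fin k → E) := fun ω i => w (Fin.castLE hk' i) ω with hX
      set Y : Ω → E := w kk with hY
      have hXmeas : Measurable X :=
        measurable_pi_lambda _ fun i => hmeas _
      have hYmeas : Measurable Y := hmeas kk
      -- independence of X and Y
      have hXY : IndepFun X Y P := by
        have hdisj : Disjoint (Finset.Iio kk) ({kk} : Finset (Fin g)) := by
          simp [Finset.disjoint_singleton_right]
        have h0 := hindep.indepFun_finset (Finset.Iio kk) {kk} hdisj hmeas
        have hφ : Measurable (fun f : (i : (Finset.Iio kk : Finset (Fin g))) → E =>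
            (fun i : Fin k => f ⟨Fin.castLE hk' i, by
              simp [Finset.mem_Iio, Fin.lt_def, hkk]⟩ : Fin k → E)) :=
          measurable_pi_lambda _ fun i => measurable_pi_apply _
        have hψ : Measurable (fun f : (i : ({kk} : Finset (Fin g))) → E =>
            f ⟨kk, Finset.mem_singleton_self kk⟩) := measurable_pi_apply _
        exact h0.comp hφ hψ
      -- the set of linearly independent (k+1)-tuples formed by snoc
      set A : Set ((Fin k → E) × E) :=
        {p | LinearIndependent ℂ (Fin.snoc p.1 p.2 : Fin (k + 1) → E)} with hA
      have hsnoc_meas : Measurable (fun p : (Fin k → E) × E =>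
          (Fin.snoc p.1 p.2 : Fin (k + 1) → E)) := by
        apply measurable_pi_lambda
        intro i
        refine Fin.lastCases ?_ ?_ i
        · simpa [Fin.snoc_last] using measurable_snd
        · intro j
          simp only [Fin.snoc_castSucc]
          exact (measurable_pi_apply j).comp measurable_fst
      have hAmeas : MeasurableSet A := by
        have : A = (fun p : (Fin k → E) × E => (Fin.snoc p.1 p.2 : Fin (k + 1) → E)) ⁻¹'
            {f : Fin (k + 1) → E | LinearIndependent ℂ f} := rfl
        rw [this]
        exact hsnoc_meas (isOpen_setOf_linearIndependent.measurableSet)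
      -- rewrite the event as a preimage
      have hevent : {ω | LinearIndependent ℂ fun i : Fin (k + 1) => w (Fin.castLE hk i) ω}
          = (fun ω => (X ω, Y ω)) ⁻¹' A := by
        ext ω
        have htuple : (fun i : Fin (k + 1) => w (Fin.castLE hk i) ω)
            = Fin.snoc (X ω) (Y ω) := by
          funext i
          refine Fin.lastCases ?_ ?_ i
          · rw [Fin.snoc_last]
            rfl
          · intro j
            rw [Fin.snoc_castSucc]
            rfl
        simp only [Set.mem_setOf_eq, Set.mem_preimage, hA, htuple]
      -- pass to the product measure
      have hmapeq : P.map (fun ω => (X ω, Y ω)) = (P.map X).prod (P.map Y) :=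
        (indepFun_iff_map_prod_eq_prod_map_map hXmeas.aemeasurable hYmeas.aemeasurable).mp hXY
      have hPmap : P ((fun ω => (X ω, Y ω)) ⁻¹' A) = ((P.map X).prod (P.map Y)) A := by
        rw [← hmapeq, Measure.map_apply (hXmeas.prodMk hYmeas) hAmeas]
      have : IsProbabilityMeasure (P.map Y) := Measure.isProbabilityMeasure_map hYmeas.aemeasurable
      have : IsProbabilityMeasure (P.map X) := Measure.isProbabilityMeasure_map hXmeas.aemeasurable
      have hprod : ((P.map X).prod (P.map Y)) A
          = ∫⁻ x, (P.map Y) (Prod.mk x ⁻¹' A) ∂(P.map X) :=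
        Measure.prod_apply hAmeas
      -- pointwise bound on sections over linearly independent tuples
      have hsection : ∀ x : Fin k → E, LinearIndependent ℂ x →
          ENNReal.ofReal η ≤ (P.map Y) (Prod.mk x ⁻¹' A) := by
        intro x hx
        obtain ⟨V, hWV, hVrank⟩ := exists_hyperplane_ge (Submodule.span ℂ (Set.range x))
          (by rw [finrank_span_eq_card hx]; simpa using hklt)
        have hSsub : {y : E | Real.sin δ ≤
            ‖y - (V.orthogonalProjectionOnto y : E)‖} ⊆ Prod.mk x ⁻¹' A := by
          intro y hy
          simp only [Set.mem_setOf_eq] at hy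
          have hyV : y ∉ V := by
            intro hmem
            rw [← Submodule.starProjection_apply, Submodule.starProjection_eq_self_iff.mpr hmem, sub_self, norm_zero] at hy
            exact absurd hy (not_le.mpr (Real.sin_pos_of_pos_of_lt_pi hδ.1
              (lt_trans hδ.2 (by linarith [Real.pi_pos]))))
          have hyspan : y ∉ Submodule.span ℂ (Set.range x) := fun h => hyV (hWV h)
          simp only [Set.mem_preimage, hA, Set.mem_setOf_eq]
          exact linearIndependent_fin_snoc.mpr ⟨hx, hyspan⟩
        have hSmeas : MeasurableSet {y : E | Real.sin δ ≤
            ‖y - (V.orthogonalProjectionOnto y : E)‖} := by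
          have hcont : Continuous fun y : E => ‖y - (V.orthogonalProjectionOnto y : E)‖ :=
            (continuous_id.sub (continuous_subtype_val.comp
              (V.orthogonalProjectionOnto).continuous)).norm
          exact (isClosed_le continuous_const hcont).measurableSet
        calc ENNReal.ofReal η ≤ P {ω | Real.sin δ ≤
              ‖w kk ω - (V.orthogonalProjectionOnto (w kk ω) : E)‖} := hanti kk V hVrank
          _ = (P.map Y) {y : E | Real.sin δ ≤ ‖y - (V.orthogonalProjectionOnto y : E)‖} := by
              rw [Measure.map_apply hYmeas hSmeas]; rfl
          _ ≤ (P.map Y) (Prod.mk x ⁻¹' A) := measure_mono hSsub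
      -- put things together
      have hLI : MeasurableSet {f : Fin k → E | LinearIndependent ℂ f} :=
        isOpen_setOf_linearIndependent.measurableSet
      have hlow : ENNReal.ofReal η * (P.map X) {f : Fin k → E | LinearIndependent ℂ f}
          ≤ ∫⁻ x, (P.map Y) (Prod.mk x ⁻¹' A) ∂(P.map X) := by
        rw [← lintegral_indicator_const hLI]
        apply lintegral_mono
        intro x
        by_cases hx : x ∈ {f : Fin k → E | LinearIndependent ℂ f}
        · rw [Set.indicator_of_mem hx]
          exact hsection x hx
        · rw [Set.indicator_of_notMem hx]
          exact zero_le
      have hmapX : (P.map X) {f : Fin k → E | LinearIndependent ℂ f}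
          = P {ω | LinearIndependent ℂ fun i : Fin k => w (Fin.castLE hk' i) ω} := by
        rw [Measure.map_apply hXmeas hLI]; rfl
      calc ENNReal.ofReal η ^ (k + 1)
          = ENNReal.ofReal η * ENNReal.ofReal η ^ k := by ring
        _ ≤ ENNReal.ofReal η * P {ω | LinearIndependent ℂ fun i : Fin k =>
              w (Fin.castLE hk' i) ω} := by
            exact mul_le_mul_right (ih hk') _
        _ = ENNReal.ofReal η * (P.map X) {f : Fin k → E | LinearIndependent ℂ f} := by
            rw [hmapX]
        _ ≤ ∫⁻ x, (P.map Y) (Prod.mk x ⁻¹' A) ∂(P.map X) := hlow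
        _ = ((P.map X).prod (P.map Y)) A := hprod.symm
        _ = P ((fun ω => (X ω, Y ω)) ⁻¹' A) := hPmap.symm
        _ = P {ω | LinearIndependent ℂ fun i : Fin (k + 1) => w (Fin.castLE hk i) ω} := by
            rw [hevent]
  exact key g le_rfl
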